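/- Let p be an odd prime and G cyclic of order p with generator tau. Let i >= 1 and let v: A/(tau-1)A -> Z/pZ be a nonzero Z_p-linear map, where A = Z_p[zeta] with tau acting by multiplication by a primitive p-th root of unity zeta. Choose a Z_p-linear map f: A -> Z/p^iZ with f((p/(1-zeta))y) congruent to v(y) mod p for all y. Define M'_v as the Z_p-module (Z/p^iZ) x A with tau(t,y) = (t + f(y), zeta y). Then the norm map N on M'_v satisfies N(t,y) = (pt + f((p/(1-zeta))y), 0); consequently H^0_hat(G, M'_v) = 0 and H^1(G, M'_v) is isomorphic to Z/pZ, and the extension 0 -> Z/p^iZ -> M'_v -> A -> 0 is nonsplit. -/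

import Mathlib

/-!
STATEMENT 18: `p` odd prime, `G = ⟨τ⟩` cyclic of order `p`, `i ≥ 1`.
`A = ℤ_p[ζ]` is modelled by the augmentation kernel of `ZMod p → ℤ_[p]`,
with `τ` (= multiplication by `ζ`) acting by the shift; the element
`p/(1-ζ)` acts as the operator `P = -∑_{l<p} l ζ^l`.  Given a nonzero map
`v : A/(τ-1)A → ℤ/p` and a `ℤ_p`-linear `f : A → ℤ/p^i` with
`f((p/(1-ζ))y) ≡ v(y) mod p`, let `M'_v = (ℤ/p^i) × A` with
`τ (t,y) = (t + f y, ζ y)`.  Then the norm `N = 1 + τ + ⋯ + τ^{p-1}`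
satisfies `N (t,y) = (p t + f((p/(1-ζ))y), 0)`; consequently
`Ĥ⁰(G, M'_v) = 0` and `H¹(G, M'_v) ≅ ℤ/p`, and the extension
`0 → ℤ/p^i → M'_v → A → 0` is nonsplit.
-/

open Finset

noncomputable def shiftEnd (p : ℕ) [Fact p.Prime] :
    Module.End ℤ_[p] (ZMod p → ℤ_[p]) :=
  LinearMap.funLeft ℤ_[p] ℤ_[p] (fun i => i - 1)

noncomputable def augSum (p : ℕ) [Fact p.Prime] :
    (ZMod p → ℤ_[p]) →ₗ[ℤ_[p]] ℤ_[p] :=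
  ∑ i : ZMod p, LinearMap.proj i

noncomputable def augIdeal (p : ℕ) [Fact p.Prime] :
    Submodule ℤ_[p] (ZMod p → ℤ_[p]) :=
  LinearMap.ker (augSum p)


section ctx
variable (p : ℕ) [Fact p.Prime]

private lemma augSum_apply' (x : ZMod p → ℤ_[p]) : augSum p x = ∑ m, x m := by
  simp [augSum, LinearMap.sum_apply, LinearMap.proj_apply]

private lemma aug_sum_eq_zero (x : ↥(augIdeal p)) : ∑ m, (x : ZMod p → ℤ_[p]) m = 0 := by
  have hx : augSum p (x : ZMod p → ℤ_[p]) = 0 := x.2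
  rwa [augSum_apply'] at hx

private lemma aug_mk (x : ZMod p → ℤ_[p]) (hx : ∑ m, x m = 0) : x ∈ augIdeal p := by
  show augSum p x = 0
  rwa [augSum_apply']

private lemma sum_range_zmod {M : Type*} [AddCommMonoid M] (g : ZMod p → M) :
    ∑ j ∈ range p, g (j : ZMod p) = ∑ m, g m := by
  refine Finset.sum_nbij' (fun j => ((j : ZMod p))) (fun m => m.val) (fun a _ => mem_univ _)
    (fun a _ => mem_range.mpr (ZMod.val_lt a)) (fun a ha => ZMod.val_cast_of_lt (mem_range.mp ha))
    (fun a _ => ZMod.natCast_rightInverse a) (fun a _ => rfl)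

variable {zeta : Module.End ℤ_[p] ↥(augIdeal p)}
variable (hzeta : ∀ x : ↥(augIdeal p),
      (zeta x : ZMod p → ℤ_[p]) = shiftEnd p (x : ZMod p → ℤ_[p]))
include hzeta

private lemma zeta_pow_apply (j : ℕ) (x : ↥(augIdeal p)) (n : ZMod p) :
    ((zeta ^ j) x : ZMod p → ℤ_[p]) n = (x : ZMod p → ℤ_[p]) (n - (j : ZMod p)) := by
  induction j generalizing n with
  | zero => simp
  | succ j ih =>
    rw [pow_succ', Module.End.mul_apply, hzeta]
    show ((zeta ^ j) x : ZMod p → ℤ_[p]) (n - 1) = _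
    rw [ih]
    congr 1
    push_cast
    ring

private lemma sum_zeta_pow (x : ↥(augIdeal p)) :
    ∑ j ∈ range p, (zeta ^ j) x = 0 := by
  apply Subtype.ext
  rw [AddSubmonoidClass.coe_finset_sum]
  funext n
  rw [Finset.sum_apply]
  show ∑ j ∈ range p, ((zeta ^ j) x : ZMod p → ℤ_[p]) n = (0 : ZMod p → ℤ_[p]) n
  have : ∀ j ∈ range p, ((zeta ^ j) x : ZMod p → ℤ_[p]) n
      = (x : ZMod p → ℤ_[p]) (n - (j : ZMod p)) := fun j _ => zeta_pow_apply p hzeta j x n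
  rw [sum_congr rfl this, sum_range_zmod p (fun m => (x : ZMod p → ℤ_[p]) (n - m))]
  have := Equiv.sum_comp (Equiv.subLeft n) (x : ZMod p → ℤ_[p])
  simp only [Equiv.subLeft_apply] at this
  rw [this, aug_sum_eq_zero p x]
  rfl

private lemma zeta_pow_p (x : ↥(augIdeal p)) : (zeta ^ p) x = x := by
  apply Subtype.ext
  funext n
  rw [zeta_pow_apply p hzeta p x n]
  simp

private lemma zeta_fix (x : ↥(augIdeal p)) (hx : zeta x = x) : x = 0 := by
  have h : ∀ n : ZMod p, (x : ZMod p → ℤ_[p]) (n - 1) = (x : ZMod p → ℤ_[p]) n := by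
    intro n
    conv_rhs => rw [← hx]
    rw [hzeta]
    rfl
  have hk : ∀ k : ℕ, (x : ZMod p → ℤ_[p]) (k : ZMod p) = (x : ZMod p → ℤ_[p]) 0 := by
    intro k
    induction k with
    | zero => simp
    | succ k ih =>
      have := h ((k + 1 : ℕ) : ZMod p)
      rw [← ih]
      rw [← this]
      congr 1
      push_cast
      ring
  have hall : ∀ n : ZMod p, (x : ZMod p → ℤ_[p]) n = (x : ZMod p → ℤ_[p]) 0 := by
    intro n
    have := hk n.val
    rwa [ZMod.natCast_rightInverse n] at this
  have hsum := aug_sum_eq_zero p x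
  rw [Finset.sum_congr rfl (fun n _ => hall n), Finset.sum_const, Finset.card_univ,
    ZMod.card] at hsum
  have hp0 : (x : ZMod p → ℤ_[p]) 0 = 0 := by
    have hpne : (p : ℤ_[p]) ≠ 0 := by
      exact_mod_cast Nat.Prime.ne_zero (Fact.out : p.Prime)
    rw [nsmul_eq_mul] at hsum
    rcases mul_eq_zero.mp hsum with h' | h'
    · exact absurd h' hpne
    · exact h'
  apply Subtype.ext
  funext n
  rw [hall n, hp0]
  rfl

end ctx


private lemma dsum1 {M : Type*} [AddCommMonoid M] (n : ℕ) (g : ℕ → M) :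
    (∑ j ∈ range n, ∑ k ∈ range j, g k) + ∑ k ∈ range n, (k + 1) • g k
      = n • ∑ k ∈ range n, g k := by
  induction n with
  | zero => simp
  | succ n ih =>
    rw [sum_range_succ (fun j => ∑ k ∈ range j, g k), sum_range_succ (fun k => (k + 1) • g k),
      sum_range_succ g, smul_add, succ_nsmul (∑ k ∈ range n, g k), ← ih]
    abel

private lemma habel {M : Type*} [AddCommGroup M] (n : ℕ) (g : ℕ → M) :
    ∑ l ∈ range (n + 1), l • (g (l + 1) - g l)
      = n • g (n + 1) - ∑ l ∈ range (n + 1), g l + g 0 := by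
  induction n with
  | zero => simp
  | succ n ih =>
    rw [sum_range_succ (fun l => l • (g (l + 1) - g l)), ih, sum_range_succ g (n + 1),
      smul_sub, succ_nsmul (g (n + 1 + 1)), succ_nsmul (g (n + 1))]
    abel

private lemma dsum2 {M : Type*} [AddCommMonoid M] (n : ℕ) (a : ℕ → M) :
    ∑ j ∈ range n, ∑ k ∈ range (j + 1), a k = ∑ k ∈ range n, (n - k) • a k := by
  induction n with
  | zero => simp
  | succ n ih =>
    rw [sum_range_succ (fun j => ∑ k ∈ range (j + 1), a k), ih]
    have h : ∀ k ∈ range (n + 1), (n + 1 - k) • a k = (n - k) • a k + a k := by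
      intro k hk
      rw [mem_range] at hk
      rw [← succ_nsmul]
      congr 1
      omega
    rw [sum_congr rfl h, sum_add_distrib, sum_range_succ (fun k => (n - k) • a k)]
    simp

section ctx2
variable (p : ℕ) [Fact p.Prime]
variable {A : Type*} [AddCommGroup A] [Module ℤ_[p] A]
variable {zeta : Module.End ℤ_[p] A} {P : Module.End ℤ_[p] A}
variable (hP : P = - ∑ l ∈ Finset.range p, l • zeta ^ l)
include hP

private lemma P_apply (y : A) : P y = - ∑ l ∈ range p, l • (zeta ^ l) y := by
  rw [hP]
  simp [LinearMap.sum_apply, LinearMap.smul_apply]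

-- needs: sum_zeta_pow hypothesis as input
private lemma P_eq_dsum (y : A) (h0 : ∑ j ∈ range p, (zeta ^ j) y = 0) :
    ∑ j ∈ range p, ∑ k ∈ range j, (zeta ^ k) y = P y := by
  have h1 := dsum1 p (fun k => (zeta ^ k) y)
  rw [h0, smul_zero] at h1
  have h2 : ∑ j ∈ range p, ∑ k ∈ range j, (zeta ^ k) y
      = - ∑ k ∈ range p, (k + 1) • (zeta ^ k) y := by
    rw [eq_neg_iff_add_eq_zero]; exact h1
  rw [h2, P_apply p hP]
  rw [neg_inj]
  have h3 : ∀ k ∈ range p, (k + 1) • (zeta ^ k) y = k • (zeta ^ k) y + (zeta ^ k) y := by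
    intro k _; rw [succ_nsmul]
  rw [sum_congr rfl h3, sum_add_distrib, h0, add_zero]

private lemma P_zeta_sub (y : A) (h0 : ∑ j ∈ range p, (zeta ^ j) y = 0)
    (hpp : (zeta ^ p) y = y) :
    P (zeta y - y) = - (p • y) := by
  obtain ⟨q, hq⟩ : ∃ q, p = q + 1 :=
    ⟨p - 1, (Nat.succ_pred_eq_of_pos (Nat.Prime.pos Fact.out)).symm⟩
  rw [P_apply p hP]
  have h4 : ∀ l ∈ range p, l • (zeta ^ l) (zeta y - y)
      = l • ((zeta ^ (l + 1)) y - (zeta ^ l) y) := by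
    intro l _
    congr 1
    rw [map_sub]
    congr 1
  rw [sum_congr rfl h4]
  have h5 := habel q (fun l => (zeta ^ l) y)
  rw [← hq] at h5
  rw [hpp, h0, pow_zero, Module.End.one_apply, sub_zero] at h5
  rw [h5, ← succ_nsmul, ← hq]
end ctx2

noncomputable def wmap (p : ℕ) [Fact p.Prime] : ↥(augIdeal p) →+ ZMod p where
  toFun y := ∑ m, m * PadicInt.toZMod ((y : ZMod p → ℤ_[p]) m)
  map_zero' := by simp
  map_add' a b := by
    simp [mul_add, Finset.sum_add_distrib]

section wlem
variable (p : ℕ) [Fact p.Prime]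

private lemma wmap_apply (y : ↥(augIdeal p)) :
    wmap p y = ∑ m, m * PadicInt.toZMod ((y : ZMod p → ℤ_[p]) m) := rfl

private lemma toZMod_sum_zero (y : ↥(augIdeal p)) :
    ∑ m, PadicInt.toZMod ((y : ZMod p → ℤ_[p]) m) = 0 := by
  rw [← map_sum, aug_sum_eq_zero p y, map_zero]

variable {zeta : Module.End ℤ_[p] ↥(augIdeal p)}
variable (hzeta : ∀ x : ↥(augIdeal p),
      (zeta x : ZMod p → ℤ_[p]) = shiftEnd p (x : ZMod p → ℤ_[p]))
include hzeta

private lemma wmap_zeta (y : ↥(augIdeal p)) : wmap p (zeta y) = wmap p y := by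
  rw [wmap_apply, wmap_apply]
  simp only [hzeta]
  have hsh : ∀ m : ZMod p, (shiftEnd p (y : ZMod p → ℤ_[p])) m
      = (y : ZMod p → ℤ_[p]) (m - 1) := fun m => rfl
  simp only [hsh]
  have he := Equiv.sum_comp (Equiv.addRight (1 : ZMod p))
    (fun m => m * PadicInt.toZMod ((y : ZMod p → ℤ_[p]) (m - 1)))
  rw [← he]
  simp only [Equiv.coe_addRight, add_sub_cancel_right]
  have hexp : ∀ m ∈ (univ : Finset (ZMod p)), (m + 1) * PadicInt.toZMod ((y : ZMod p → ℤ_[p]) m)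
      = m * PadicInt.toZMod ((y : ZMod p → ℤ_[p]) m) + PadicInt.toZMod ((y : ZMod p → ℤ_[p]) m) := by
    intro m _; rw [add_mul, one_mul]
  rw [sum_congr rfl hexp, sum_add_distrib, toZMod_sum_zero p y, add_zero]

omit hzeta

private lemma wmap_exists_one : ∃ y : ↥(augIdeal p), wmap p y = 1 := by
  have hp1 : 1 < p := Nat.Prime.one_lt Fact.out
  haveI : Fact (1 < p) := ⟨hp1⟩
  set xf : ZMod p → ℤ_[p] :=
    fun m => (if m = 1 then 1 else 0) - (if m = 0 then 1 else 0) with hxf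
  have hmem : xf ∈ augIdeal p := by
    apply aug_mk
    rw [sum_sub_distrib, sum_ite_eq' univ (1 : ZMod p) (fun _ => (1 : ℤ_[p])),
      sum_ite_eq' univ (0 : ZMod p) (fun _ => (1 : ℤ_[p]))]
    simp
  refine ⟨⟨xf, hmem⟩, ?_⟩
  rw [wmap_apply]
  have hterm : ∀ m ∈ (univ : Finset (ZMod p)),
      m * PadicInt.toZMod (xf m)
        = (if m = 1 then m else 0) - (if m = 0 then m else 0) := by
    intro m _
    rw [hxf]
    simp only
    rw [map_sub, apply_ite PadicInt.toZMod, apply_ite PadicInt.toZMod, map_one, map_zero,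
      mul_sub, mul_ite, mul_ite, mul_one, mul_zero]
  rw [sum_congr rfl hterm, sum_sub_distrib, sum_ite_eq' univ (1 : ZMod p) (fun m => m),
    sum_ite_eq' univ (0 : ZMod p) (fun m => m)]
  simp

include hzeta

private lemma wmap_solve (y : ↥(augIdeal p)) (hw : wmap p y = 0) :
    ∃ z : ↥(augIdeal p), zeta z - z = y := by
  have hp0 : 0 < p := Nat.Prime.pos Fact.out
  set Y : ZMod p → ℤ_[p] := (y : ZMod p → ℤ_[p]) with hY
  set z' : ZMod p → ℤ_[p] := fun m => -∑ k ∈ range (m.val + 1), Y (k : ZMod p) with hz'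
  set s : ℤ_[p] := ∑ m, z' m with hs
  -- toZMod s = 0
  have hs0 : PadicInt.toZMod s = 0 := by
    have h1 : s = -∑ j ∈ range p, ∑ k ∈ range (j + 1), Y (k : ZMod p) := by
      rw [hs, ← sum_range_zmod p (fun m => z' m), ← sum_neg_distrib]
      apply sum_congr rfl
      intro j hj
      rw [hz']
      simp only
      rw [ZMod.val_cast_of_lt (mem_range.mp hj)]
    rw [h1, map_neg, map_sum]
    have h2 : ∀ j ∈ range p, PadicInt.toZMod (∑ k ∈ range (j + 1), Y (k : ZMod p))
        = ∑ k ∈ range (j + 1), PadicInt.toZMod (Y (k : ZMod p)) := fun j _ => map_sum _ _ _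
    rw [sum_congr rfl h2, dsum2 p (fun k => PadicInt.toZMod (Y (k : ZMod p)))]
    have h3 : ∀ k ∈ range p, (p - k) • PadicInt.toZMod (Y (k : ZMod p))
        = -((k : ZMod p) * PadicInt.toZMod (Y (k : ZMod p))) := by
      intro k hk
      rw [nsmul_eq_mul, Nat.cast_sub (le_of_lt (mem_range.mp hk)), ZMod.natCast_self,
        zero_sub, neg_mul]
    rw [sum_congr rfl h3, sum_neg_distrib, neg_neg,
      sum_range_zmod p (fun m => m * PadicInt.toZMod (Y m)), ← wmap_apply, hw]
  -- p ∣ s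
  have hdvd : (p : ℤ_[p]) ∣ s := by
    have : s ∈ RingHom.ker (PadicInt.toZMod (p := p)) := hs0
    rw [PadicInt.ker_toZMod, PadicInt.maximalIdeal_eq_span_p, Ideal.mem_span_singleton] at this
    exact this
  obtain ⟨u, hu⟩ := hdvd
  set z : ZMod p → ℤ_[p] := fun m => z' m - u with hz
  have hzmem : z ∈ augIdeal p := by
    apply aug_mk
    rw [hz]
    simp only
    rw [sum_sub_distrib, ← hs, sum_const, card_univ, ZMod.card, hu, nsmul_eq_mul, sub_self]
  refine ⟨⟨z, hzmem⟩, ?_⟩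
  apply Subtype.ext
  rw [AddSubgroupClass.coe_sub]
  funext n
  have hzeta' : (zeta ⟨z, hzmem⟩ : ZMod p → ℤ_[p]) n = z (n - 1) := by
    rw [hzeta]; rfl
  show (zeta ⟨z, hzmem⟩ : ZMod p → ℤ_[p]) n - z n = Y n
  rw [hzeta']
  have hkey : z' (n - 1) - z' n = Y n := by
    rcases Nat.eq_zero_or_eq_succ_pred n.val with hv | hv
    · -- n = 0
      have hn0 : n = 0 := by
        have := (ZMod.natCast_rightInverse n).symm
        rw [hv] at this
        simpa using this
      have hm1 : ((p - 1 : ℕ) : ZMod p) = n - 1 := by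
        rw [hn0, Nat.cast_sub (le_of_lt (Nat.Prime.one_lt Fact.out)), ZMod.natCast_self]
        ring
      have hval1 : (n - 1).val = p - 1 := by
        rw [← hm1, ZMod.val_cast_of_lt (Nat.sub_lt hp0 Nat.one_pos)]
      rw [hz'] at *
      simp only
      rw [hval1, hn0, ZMod.val_zero, Nat.sub_add_cancel hp0,
        sum_range_zmod p (fun m => Y m), aug_sum_eq_zero p y, sum_range_one, Nat.cast_zero,
        neg_zero, zero_sub, neg_neg]
    · -- n.val = j' + 1
      set j' := n.val - 1 with hj'
      have hnval : n.val = j' + 1 := hv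
      have hncast : ((j' + 1 : ℕ) : ZMod p) = n := by
        rw [← hnval]; exact ZMod.natCast_rightInverse n
      have hj'lt : j' < p := by
        have := ZMod.val_lt n
        omega
      have hsub : n - 1 = ((j' : ℕ) : ZMod p) := by
        rw [← hncast]; push_cast; ring
      have hval' : (n - 1).val = j' := by rw [hsub, ZMod.val_cast_of_lt hj'lt]
      rw [hz']
      simp only
      rw [hval', hnval, sum_range_succ (fun k => Y (k : ZMod p)) (j' + 1)]
      rw [hncast]
      ring
  rw [hz]
  simp only
  rw [sub_sub_sub_cancel_right]
  exact hkey

end wlem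

section iota
variable (p i : ℕ) [Fact p.Prime]

private noncomputable def iotaH : ℤ →+ ZMod (p ^ i) :=
  (AddMonoidHom.mulRight ((p : ZMod (p ^ i)) ^ (i - 1))).comp (Int.castAddHom (ZMod (p ^ i)))

private lemma iotaH_apply (n : ℤ) : iotaH p i n = (n : ZMod (p ^ i)) * (p : ZMod (p ^ i)) ^ (i - 1) := rfl

private lemma ppow_cast : ((p : ZMod (p ^ i)) : ZMod (p ^ i)) ^ i = 0 := by
  rw [← Nat.cast_pow, ZMod.natCast_self]

variable (hi : 1 ≤ i)
include hi

private lemma pmul_ppow : (p : ZMod (p ^ i)) * (p : ZMod (p ^ i)) ^ (i - 1) = 0 := by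
  rw [← pow_succ', Nat.sub_add_cancel hi, ppow_cast]

private lemma iotaH_p : iotaH p i (p : ℤ) = 0 := by
  rw [iotaH_apply, Int.cast_natCast, pmul_ppow p i hi]

private noncomputable def iota : ZMod p →+ ZMod (p ^ i) :=
  ZMod.lift p ⟨iotaH p i, iotaH_p p i hi⟩

private lemma iota_apply (a : ZMod p) :
    iota p i hi a = ((a.val : ℕ) : ZMod (p ^ i)) * (p : ZMod (p ^ i)) ^ (i - 1) := by
  have h1 : a = ((a.val : ℤ) : ZMod p) := by
    push_cast
    exact (ZMod.natCast_rightInverse a).symm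
  rw [iota]
  conv_lhs => rw [h1]
  rw [ZMod.lift_coe]
  rw [iotaH_apply]
  push_cast
  rfl

private lemma iota_tor (a : ZMod p) : (p : ZMod (p ^ i)) * iota p i hi a = 0 := by
  rw [iota_apply, ← mul_assoc, mul_comm ((p : ZMod (p^i))) ((a.val : ℕ) : ZMod (p ^ i)),
    mul_assoc, pmul_ppow p i hi, mul_zero]

private lemma iota_inj (a : ZMod p) (h : iota p i hi a = 0) : a = 0 := by
  haveI : NeZero (p ^ i) := ⟨pow_ne_zero i (Nat.Prime.ne_zero Fact.out)⟩
  rw [iota_apply] at h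
  have h2 : ((a.val * p ^ (i - 1) : ℕ) : ZMod (p ^ i)) = 0 := by push_cast; exact h
  have h3 : p ^ i ∣ a.val * p ^ (i - 1) := by
    rwa [ZMod.natCast_eq_zero_iff] at h2
  have h4 : p ∣ a.val := by
    have hpi : p ^ i = p * p ^ (i - 1) := by
      rw [← pow_succ', Nat.sub_add_cancel hi]
    rw [hpi, mul_comm p (p ^ (i - 1)), mul_comm a.val (p ^ (i - 1))] at h3
    exact (Nat.mul_dvd_mul_iff_left (pow_pos (Nat.Prime.pos Fact.out) _)).mp h3
  have h5 : a.val = 0 := Nat.eq_zero_of_dvd_of_lt h4 (ZMod.val_lt a)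
  calc a = ((a.val : ℕ) : ZMod p) := (ZMod.natCast_rightInverse a).symm
    _ = 0 := by rw [h5]; exact Nat.cast_zero

private lemma iota_surj (t : ZMod (p ^ i)) (ht : (p : ZMod (p ^ i)) * t = 0) :
    ∃ a : ZMod p, iota p i hi a = t := by
  haveI : NeZero (p ^ i) := ⟨pow_ne_zero i (Nat.Prime.ne_zero Fact.out)⟩
  have h1 : ((p * t.val : ℕ) : ZMod (p ^ i)) = 0 := by
    push_cast
    rw [ZMod.natCast_rightInverse t]
    exact ht
  have h2 : p ^ i ∣ p * t.val := by rwa [ZMod.natCast_eq_zero_iff] at h1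
  obtain ⟨k, hk⟩ := h2
  have hpi : p ^ i = p * p ^ (i - 1) := by rw [← pow_succ', Nat.sub_add_cancel hi]
  have hk' : p * t.val = p * (p ^ (i - 1) * k) := by rw [hk, hpi, mul_assoc]
  have hm : t.val = p ^ (i - 1) * k := Nat.eq_of_mul_eq_mul_left (Nat.Prime.pos Fact.out) hk'
  set m := k with hmk
  refine ⟨(m : ZMod p), ?_⟩
  rw [iota_apply, ZMod.val_natCast]
  have hnat : p ^ (i - 1) * m = p ^ (i - 1) * (m % p) + p ^ i * (m / p) := by
    have hpi : p ^ i = p ^ (i - 1) * p := by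
      rw [← pow_succ, Nat.sub_add_cancel hi]
    conv_lhs => rw [← Nat.mod_add_div m p]
    rw [hpi]
    ring
  have ht2 : t = ((t.val : ℕ) : ZMod (p ^ i)) := (ZMod.natCast_rightInverse t).symm
  rw [ht2, hm, hnat]
  push_cast
  rw [ppow_cast]
  ring

end iota

private lemma end_sum_apply {M : Type*} [AddCommMonoid M] (s : Finset ℕ)
    (F : ℕ → AddMonoid.End M) (m : M) : (∑ j ∈ s, F j) m = ∑ j ∈ s, F j m := by
  induction s using Finset.cons_induction with
  | empty => rfl
  | cons a s ha ih => rw [sum_cons, sum_cons, ← ih]; rfl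

set_option maxHeartbeats 2000000 in
theorem stmt_18 (p i : ℕ) [Fact p.Prime] (hp : Odd p) (hi : 1 ≤ i)
    -- multiplication by ζ on A, i.e. the restricted shift
    (zeta : Module.End ℤ_[p] ↥(augIdeal p))
    (hzeta : ∀ x : ↥(augIdeal p),
      (zeta x : ZMod p → ℤ_[p]) = shiftEnd p (x : ZMod p → ℤ_[p]))
    -- the operator p/(1-ζ) = -∑_{l<p} l ζ^l on A
    (P : Module.End ℤ_[p] ↥(augIdeal p))
    (hP : P = - ∑ l ∈ Finset.range p, l • zeta ^ l)
    -- the data v and f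
    (v : ↥(augIdeal p) →+ ZMod p) (hv : v ≠ 0)
    (hvshift : ∀ y, v (zeta y) = v y)
    (f : ↥(augIdeal p) →+ ZMod (p ^ i))
    (hfs : ∀ (c : ℤ_[p]) (y : ↥(augIdeal p)), f (c • y) = PadicInt.toZModPow i c * f y)
    (hf : ∀ y, ZMod.castHom (dvd_pow_self p (Nat.one_le_iff_ne_zero.mp hi)) (ZMod p)
      (f (P y)) = v y)
    -- the module M'_v and the action of τ
    (τ' : AddMonoid.End (ZMod (p ^ i) × ↥(augIdeal p)))
    (hτ : ∀ m, τ' m = (m.1 + f m.2, zeta m.2)) :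
    -- the norm formula N (t, y) = (p t + f((p/(1-ζ)) y), 0)
    (∀ m : ZMod (p ^ i) × ↥(augIdeal p),
      (∑ j ∈ Finset.range p, τ' ^ j) m = ((p : ZMod (p ^ i)) * m.1 + f (P m.2), 0)) ∧
    -- Ĥ⁰(G, M'_v) = 0: every fixed point is a norm
    (∀ m : ZMod (p ^ i) × ↥(augIdeal p), τ' m = m →
      ∃ y, m = (∑ j ∈ Finset.range p, τ' ^ j) y) ∧
    -- H¹(G, M'_v) ≅ ℤ/p
    Nat.card
      (↥(AddMonoidHom.ker ((∑ j ∈ Finset.range p, τ' ^ j : AddMonoid.End _) : _ →+ _)) ⧸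
        ((AddMonoidHom.range (τ' - 1 : AddMonoid.End _)).addSubgroupOf
          (AddMonoidHom.ker ((∑ j ∈ Finset.range p, τ' ^ j : AddMonoid.End _) : _ →+ _)))) =
      p ∧
    -- the extension 0 → ℤ/p^i → M'_v → A → 0 is nonsplit
    ¬ ∃ s : ↥(augIdeal p) →+ ZMod (p ^ i) × ↥(augIdeal p),
        (∀ y, (s y).2 = y) ∧ (∀ y, τ' (s y) = s (zeta y)) ∧
        (∀ (c : ℤ_[p]) (y : ↥(augIdeal p)),
          (s (c • y)).1 = PadicInt.toZModPow i c * (s y).1 ∧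
          (s (c • y)).2 = c • (s y).2) := by
  haveI : NeZero (p ^ i) := ⟨pow_ne_zero i (Nat.Prime.ne_zero Fact.out)⟩
  -- iterates of τ'
  have hτpow : ∀ (j : ℕ) (m : ZMod (p ^ i) × ↥(augIdeal p)),
      (τ' ^ j) m = (m.1 + f (∑ k ∈ range j, (zeta ^ k) m.2), (zeta ^ j) m.2) := by
    intro j
    induction j with
    | zero => intro m; simp
    | succ j ih =>
      intro m
      have hstep : (τ' ^ (j + 1)) m = τ' ((τ' ^ j) m) := by
        rw [pow_succ']; rfl
      rw [hstep, ih, hτ]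
      apply Prod.ext
      · show m.1 + f (∑ k ∈ range j, (zeta ^ k) m.2) + f ((zeta ^ j) m.2) = _
        rw [sum_range_succ, map_add f, add_assoc]
      · show zeta ((zeta ^ j) m.2) = (zeta ^ (j + 1)) m.2
        rw [pow_succ']
        rfl
  -- Part 1: the norm formula
  have hN : ∀ m : ZMod (p ^ i) × ↥(augIdeal p),
      (∑ j ∈ Finset.range p, τ' ^ j) m = ((p : ZMod (p ^ i)) * m.1 + f (P m.2), 0) := by
    intro m
    rw [end_sum_apply]
    have hterm : ∀ j ∈ range p, (τ' ^ j) m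
        = (m.1 + f (∑ k ∈ range j, (zeta ^ k) m.2), (zeta ^ j) m.2) := fun j _ => hτpow j m
    rw [sum_congr rfl hterm]
    apply Prod.ext
    · rw [Prod.fst_sum]
      show ∑ j ∈ range p, (m.1 + f (∑ k ∈ range j, (zeta ^ k) m.2)) = _
      rw [sum_add_distrib, sum_const, card_range, ← map_sum f,
        P_eq_dsum p hP m.2 (sum_zeta_pow p hzeta m.2), nsmul_eq_mul]
    · rw [Prod.snd_sum]
      show ∑ j ∈ range p, (zeta ^ j) m.2 = 0
      exact sum_zeta_pow p hzeta m.2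
  -- the linear functional w and the comparison with v
  obtain ⟨y₁, hy₁⟩ := wmap_exists_one p
  set c : ZMod p := v y₁ with hcdef
  have key : ∀ y, v y = c * wmap p y := by
    intro y
    set u : ↥(augIdeal p) := y - ((wmap p y).val : ℕ) • y₁ with hu
    have hwu : wmap p u = 0 := by
      rw [hu, map_sub, map_nsmul, hy₁, nsmul_eq_mul, mul_one,
        ZMod.natCast_rightInverse (wmap p y), sub_self]
    obtain ⟨z, hz⟩ := wmap_solve p hzeta u hwu
    have hvu : v u = 0 := by rw [← hz, map_sub, hvshift, sub_self]
    have hyu : y = u + ((wmap p y).val : ℕ) • y₁ := by rw [hu, sub_add_cancel]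
    calc v y = v (u + ((wmap p y).val : ℕ) • y₁) := by rw [← hyu]
      _ = ((wmap p y).val : ℕ) • v y₁ := by rw [map_add, hvu, zero_add, map_nsmul]
      _ = c * wmap p y := by
          rw [nsmul_eq_mul, ZMod.natCast_rightInverse (wmap p y), mul_comm, hcdef]
  have hc : c ≠ 0 := by
    intro h0
    apply hv
    ext y
    rw [key y, h0, zero_mul]
    rfl
  have hker : ∀ y : ↥(augIdeal p), v y = 0 → ∃ z, zeta z - z = y := by
    intro y hy
    rw [key y] at hy
    rcases mul_eq_zero.mp hy with h | h
    · exact absurd h hc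
    · exact wmap_solve p hzeta y h
  have hy₀ : ∃ y₀, v y₀ ≠ 0 := by
    by_contra h
    push_neg at h
    exact hv (AddMonoidHom.ext fun y => h y)
  obtain ⟨y₀, hy₀⟩ := hy₀
  -- (τ' - 1) formula
  have hτ1 : ∀ m : ZMod (p ^ i) × ↥(augIdeal p),
      (τ' - 1) m = (f m.2, zeta m.2 - m.2) := by
    intro m
    show τ' m - m = _
    rw [hτ]
    apply Prod.ext
    · show m.1 + f m.2 - m.1 = f m.2
      ring
    · rfl
  refine ⟨hN, ?_, ?_, ?_⟩
  · -- Part 2: fixed points are norms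
    intro m hm
    have h2 : zeta m.2 = m.2 := congrArg Prod.snd ((hτ m).symm.trans hm)
    have hm2 : m.2 = 0 := zeta_fix p hzeta m.2 h2
    set a : ZMod (p ^ i) := f (P y₀) with ha
    have hunit : IsUnit a := by
      have h1 : ¬ (p ∣ a.val) := by
        intro hd
        apply hy₀
        rw [← hf y₀, ← ha]
        have hval : a = ((a.val : ℕ) : ZMod (p ^ i)) := (ZMod.natCast_rightInverse a).symm
        rw [hval, map_natCast]
        rwa [ZMod.natCast_eq_zero_iff]
      have h2' : Nat.Coprime a.val p :=
        ((Nat.Prime.coprime_iff_not_dvd Fact.out).mpr h1).symm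
      have h3 : Nat.Coprime a.val (p ^ i) := Nat.Coprime.pow_right i h2'
      have h4 := (ZMod.isUnit_iff_coprime a.val (p ^ i)).mpr h3
      rwa [ZMod.natCast_rightInverse a] at h4
    obtain ⟨au, hau⟩ := hunit
    set b : ZMod (p ^ i) := m.1 * ((au⁻¹ : (ZMod (p ^ i))ˣ) : ZMod (p ^ i)) with hb
    set cc : ℤ_[p] := ((b.val : ℕ) : ℤ_[p]) with hcc
    refine ⟨(0, cc • y₀), ?_⟩
    rw [hN (0, cc • y₀)]
    have hfy : f (P (cc • y₀)) = m.1 := by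
      rw [map_smul, hfs, ← ha]
      have htoz : PadicInt.toZModPow i cc = b := by
        rw [hcc, map_natCast, ZMod.natCast_rightInverse b]
      rw [htoz, hb, mul_assoc, ← hau, Units.inv_mul, mul_one]
    show m = ((p : ZMod (p ^ i)) * 0 + f (P ((0, cc • y₀) : ZMod (p ^ i) × ↥(augIdeal p)).2), 0)
    rw [mul_zero, zero_add]
    apply Prod.ext
    · exact hfy.symm
    · exact hm2
  · -- Part 3: H^1 has cardinality p
    set Nend : AddMonoid.End (ZMod (p ^ i) × ↥(augIdeal p)) := ∑ j ∈ Finset.range p, τ' ^ j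
      with hNend
    set K := AddMonoidHom.ker ((Nend : AddMonoid.End _) :
        ZMod (p ^ i) × ↥(augIdeal p) →+ ZMod (p ^ i) × ↥(augIdeal p)) with hK
    set R := (AddMonoidHom.range (τ' - 1 : AddMonoid.End _)).addSubgroupOf K with hR
    have hmemK : ∀ a : ZMod p, ((iota p i hi a, 0) : ZMod (p ^ i) × ↥(augIdeal p)) ∈ K := by
      intro a
      rw [hK]
      show Nend (iota p i hi a, 0) = 0
      rw [hNend, hN]
      show ((p : ZMod (p ^ i)) * iota p i hi a + f (P 0), (0 : ↥(augIdeal p)))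
        = (0, (0 : ↥(augIdeal p)))
      rw [map_zero P, map_zero f, add_zero, iota_tor p i hi a]
    set Θ : ZMod p → K ⧸ R := fun a => QuotientAddGroup.mk ⟨(iota p i hi a, 0), hmemK a⟩
      with hΘ
    have hinj : Function.Injective Θ := by
      intro a b h
      rw [hΘ] at h
      simp only at h
      rw [QuotientAddGroup.eq, hR, AddSubgroup.mem_addSubgroupOf] at h
      erw [AddMonoidHom.mem_range] at h
      obtain ⟨m, hm⟩ := h
      erw [hτ1 m] at hm
      have hsnd : zeta m.2 - m.2 = -(0 : ↥(augIdeal p)) + 0 := congrArg Prod.snd hm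
      rw [neg_zero, zero_add] at hsnd
      have hm20 : m.2 = 0 := zeta_fix p hzeta m.2 (sub_eq_zero.mp hsnd)
      have hfst : f m.2 = -(iota p i hi a) + iota p i hi b := congrArg Prod.fst hm
      rw [hm20, map_zero] at hfst
      have : iota p i hi (b - a) = 0 := by
        rw [map_sub, ← neg_add_eq_sub, ← hfst]
      have hba : b - a = 0 := iota_inj p i hi _ this
      have := sub_eq_zero.mp hba
      exact this.symm
    have hsurj : Function.Surjective Θ := by
      intro q
      refine QuotientAddGroup.induction_on q ?_
      intro x
      obtain ⟨⟨t, y⟩, hx⟩ := x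
      have hx' : Nend (t, y) = 0 := hx
      rw [hNend, hN] at hx'
      have heq : (p : ZMod (p ^ i)) * t + f (P y) = 0 := congrArg Prod.fst hx'
      have hfPy : f (P y) = -((p : ZMod (p ^ i)) * t) := by
        rw [eq_neg_iff_add_eq_zero, add_comm]
        exact heq
      have hvy : v y = 0 := by
        rw [← hf y, hfPy, map_neg, map_mul, map_natCast, ZMod.natCast_self, zero_mul, neg_zero]
      obtain ⟨z, hz⟩ := hker y hvy
      set t' : ZMod (p ^ i) := t - f z with ht'
      have hfpz : (p : ZMod (p ^ i)) * f z = f (p • z) := by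
        rw [← Nat.cast_smul_eq_nsmul ℤ_[p] p z, hfs, map_natCast]
      have hpt : (p : ZMod (p ^ i)) * t = f (p • z) := by
        have hPy : P y = -(p • z) := by
          rw [← hz]
          exact P_zeta_sub p hP z (sum_zeta_pow p hzeta z) (zeta_pow_p p hzeta z)
        rw [hPy, map_neg] at hfPy
        have := neg_injective hfPy
        exact this.symm
      have hpt' : (p : ZMod (p ^ i)) * t' = 0 := by
        rw [ht', mul_sub, hpt, hfpz, sub_self]
      obtain ⟨a, ha⟩ := iota_surj p i hi t' hpt'
      refine ⟨a, ?_⟩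
      rw [hΘ]
      simp only
      rw [QuotientAddGroup.eq, hR, AddSubgroup.mem_addSubgroupOf]
      erw [AddMonoidHom.mem_range]
      refine ⟨(0, z), ?_⟩
      erw [hτ1 (0, z)]
      apply Prod.ext
      · show f z = -(iota p i hi a) + t
        rw [ha, ht']
        ring
      · show zeta z - z = -(0 : ↥(augIdeal p)) + y
        rw [neg_zero, zero_add]
        exact hz
    have hbij := Nat.card_eq_of_bijective Θ ⟨hinj, hsurj⟩
    rw [Nat.card_zmod] at hbij
    exact hbij.symm
  · -- Part 4: nonsplit
    rintro ⟨s, hs2, hsτ, -⟩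
    set g : ↥(augIdeal p) →+ ZMod (p ^ i) :=
      (AddMonoidHom.fst (ZMod (p ^ i)) ↥(augIdeal p)).comp s with hg
    have hrel : ∀ y, f y = g (zeta y - y) := by
      intro y
      have h := hsτ y
      rw [hτ (s y), hs2 y] at h
      have hfst : (s y).1 + f y = (s (zeta y)).1 := congrArg Prod.fst h
      rw [map_sub]
      show f y = (s (zeta y)).1 - (s y).1
      rw [← hfst]
      ring
    have hcomm : ∀ y, zeta (P y) = P (zeta y) := by
      intro y
      rw [P_apply p hP, P_apply p hP, map_neg, map_sum]
      congr 1
      apply sum_congr rfl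
      intro l _
      rw [map_nsmul]
      congr 1
      rw [← Module.End.mul_apply, ← Module.End.mul_apply, ← pow_succ', ← pow_succ]
    apply hv
    ext y
    show v y = 0
    rw [← hf y, hrel (P y), hcomm y, ← map_sub P,
      P_zeta_sub p hP y (sum_zeta_pow p hzeta y) (zeta_pow_p p hzeta y),
      map_neg g, map_neg, map_nsmul g, map_nsmul, nsmul_eq_mul, ZMod.natCast_self,
      zero_mul, neg_zero]
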